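/- Let a, b be positive integers and n = a+b. The Stanley–Thomas word map A ↦ w(A) is a bijection from the set A([a]×[b]) of antichains of [a]×[b] onto the set of words in {−1,+1}^n having exactly a letters equal to −1 and b letters equal to +1; moreover, this bijection is equivariant with respect to rowmotion on antichains and the rightward cyclic shift on words: w(Φ_A(A)) = C_R(w(A)) for every antichain A, where C_R sends (w_1,…,w_n) to (w_n,w_1,…,w_{n−1}). -/

import Mathlib

open scoped Classical in
/-- Rowmotion on antichains of a finite poset: `A` maps to the set of minimal
elements of the complement of the order ideal generated by `A`. -/
noncomputable def rowmotionA {P : Type*} [PartialOrder P] [Fintype P]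
    (A : Finset P) : Finset P :=
  Finset.univ.filter (fun y =>
    ¬ (∃ p ∈ A, y ≤ p) ∧ ∀ z, ¬ (∃ p ∈ A, z ≤ p) → z ≤ y → z = y)

open scoped Classical in
/-- The Stanley–Thomas word of an antichain of `[a] × [b]` (indices `0`-based):
for `i < a`, letter `i` is `+1` iff `A` meets positive fiber `i`;
for `a ≤ i < a+b`, letter `i` is `+1` iff `A` misses negative fiber `i - a`. -/
noncomputable def stWord (a b : ℕ) (A : Finset (Fin a × Fin b)) (i : Fin (a + b)) : ℤ :=
  if (i : ℕ) < a then (if ∃ p ∈ A, (p.1 : ℕ) = (i : ℕ) then 1 else -1)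
  else (if ∃ p ∈ A, (p.2 : ℕ) + a = (i : ℕ) then -1 else 1)

open Finset

section helpers
open scoped Classical
variable {P : Type*} [PartialOrder P] [Fintype P]

lemma mem_rowmotionA {A : Finset P} {q : P} :
    q ∈ rowmotionA A ↔
      (¬ ∃ p ∈ A, q ≤ p) ∧ ∀ z, (¬ ∃ p ∈ A, z ≤ p) → z ≤ q → z = q := by
  simp [rowmotionA]

lemma exists_min_le {A : Finset P} {y : P} (hy : ¬ ∃ p ∈ A, y ≤ p) :
    ∃ q, q ∈ rowmotionA A ∧ q ≤ y := by
  classical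
  obtain ⟨m, hm, hmin⟩ := Finset.exists_minimal
    (s := Finset.univ.filter (fun z => (¬ ∃ p ∈ A, z ≤ p) ∧ z ≤ y))
    ⟨y, Finset.mem_filter.mpr ⟨Finset.mem_univ y, hy, le_rfl⟩⟩
  simp only [Finset.mem_filter, Finset.mem_univ, true_and] at hm hmin
  refine ⟨m, mem_rowmotionA.mpr ⟨hm.1, ?_⟩, hm.2⟩
  intro z hz hzm
  by_contra hne
  exact hne (le_antisymm hzm (hmin ⟨hz, le_trans hzm hm.2⟩ hzm))

end helpers

section ab
variable {a b : ℕ}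

lemma anti_lt {A : Finset (Fin a × Fin b)}
    (hA : IsAntichain (· ≤ ·) (↑A : Set (Fin a × Fin b)))
    {p q : Fin a × Fin b} (hp : p ∈ A) (hq : q ∈ A) (h : p.1 < q.1) : q.2 < p.2 := by
  by_contra hc
  push_neg at hc
  exact hA (Finset.mem_coe.mpr hp) (Finset.mem_coe.mpr hq)
    (fun he => (ne_of_lt h) (congrArg Prod.fst he)) ⟨le_of_lt h, hc⟩

lemma fst_injOn {A : Finset (Fin a × Fin b)}
    (hA : IsAntichain (· ≤ ·) (↑A : Set (Fin a × Fin b))) :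
    Set.InjOn Prod.fst (↑A : Set (Fin a × Fin b)) := by
  intro p hp q hq h
  by_contra hne
  have h2 : p.2 ≠ q.2 := fun h2 => hne (Prod.ext h h2)
  rcases lt_or_gt_of_ne h2 with h2 | h2
  · exact hA (Finset.mem_coe.mpr hp) (Finset.mem_coe.mpr hq) hne ⟨le_of_eq h, h2.le⟩
  · exact hA (Finset.mem_coe.mpr hq) (Finset.mem_coe.mpr hp) (Ne.symm hne) ⟨le_of_eq h.symm, h2.le⟩

lemma snd_injOn {A : Finset (Fin a × Fin b)}
    (hA : IsAntichain (· ≤ ·) (↑A : Set (Fin a × Fin b))) :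
    Set.InjOn Prod.snd (↑A : Set (Fin a × Fin b)) := by
  intro p hp q hq h
  by_contra hne
  have h1 : p.1 ≠ q.1 := fun h1 => hne (Prod.ext h1 h)
  rcases lt_or_gt_of_ne h1 with h1 | h1
  · exact hA (Finset.mem_coe.mpr hp) (Finset.mem_coe.mpr hq) hne ⟨h1.le, le_of_eq h⟩
  · exact hA (Finset.mem_coe.mpr hq) (Finset.mem_coe.mpr hp) (Ne.symm hne) ⟨h1.le, le_of_eq h.symm⟩

end ab
section E
open scoped Classical
variable {a b : ℕ}

lemma E3 {A : Finset (Fin a × Fin b)} (ha : 1 ≤ a) (hb : 1 ≤ b) :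
    (∃ q ∈ rowmotionA A, (q.2 : ℕ) = 0) ↔ ¬ ∃ p ∈ A, (p.1 : ℕ) = a - 1 := by
  constructor
  · rintro ⟨q, hq, hq2⟩ ⟨p, hp, hp1⟩
    refine (mem_rowmotionA.mp hq).1 ⟨p, hp, ⟨?_, ?_⟩⟩
    · rw [Fin.le_def]; have := q.1.isLt; omega
    · rw [Fin.le_def]; omega
  · intro hno
    have hy : ¬ ∃ p ∈ A, ((⟨a-1, by omega⟩ : Fin a), (⟨0, by omega⟩ : Fin b)) ≤ p := by
      rintro ⟨p, hp, hle⟩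
      have h1 := hle.1
      rw [Fin.le_def] at h1
      simp only [Fin.val_mk] at h1
      exact hno ⟨p, hp, by have := p.1.isLt; omega⟩
    obtain ⟨q, hq, hqy⟩ := exists_min_le hy
    have h2 := hqy.2
    rw [Fin.le_def] at h2
    exact ⟨q, hq, by simp only [Fin.val_mk] at h2; omega⟩

lemma E4 {A : Finset (Fin a × Fin b)} (ha : 1 ≤ a) (hb : 1 ≤ b) :
    (∃ q ∈ rowmotionA A, (q.1 : ℕ) = 0) ↔ ¬ ∃ p ∈ A, (p.2 : ℕ) = b - 1 := by
  constructor
  · rintro ⟨q, hq, hq1⟩ ⟨p, hp, hp2⟩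
    refine (mem_rowmotionA.mp hq).1 ⟨p, hp, ⟨?_, ?_⟩⟩
    · rw [Fin.le_def]; omega
    · rw [Fin.le_def]; have := q.2.isLt; omega
  · intro hno
    have hy : ¬ ∃ p ∈ A, ((⟨0, by omega⟩ : Fin a), (⟨b-1, by omega⟩ : Fin b)) ≤ p := by
      rintro ⟨p, hp, hle⟩
      have h2 := hle.2
      rw [Fin.le_def] at h2
      simp only [Fin.val_mk] at h2
      exact hno ⟨p, hp, by have := p.2.isLt; omega⟩
    obtain ⟨q, hq, hqy⟩ := exists_min_le hy
    have h1 := hqy.1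
    rw [Fin.le_def] at h1
    exact ⟨q, hq, by simp only [Fin.val_mk] at h1; omega⟩

lemma E1 {A : Finset (Fin a × Fin b)}
    (hA : IsAntichain (· ≤ ·) (↑A : Set (Fin a × Fin b)))
    {x : ℕ} (hx0 : 0 < x) (hxa : x < a) :
    (∃ q ∈ rowmotionA A, (q.1 : ℕ) = x) ↔ ∃ p ∈ A, (p.1 : ℕ) = x - 1 := by
  constructor
  · rintro ⟨q, hq, hq1⟩
    obtain ⟨hqI, hqmin⟩ := mem_rowmotionA.mp hq
    set z : Fin a × Fin b := (⟨x-1, by omega⟩, q.2) with hz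
    have hzq : z ≤ q := ⟨by rw [Fin.le_def]; simp only [hz, Fin.val_mk]; omega, le_rfl⟩
    have hzne : z ≠ q := fun h => by
      have := congrArg (fun r => (r.1 : ℕ)) h
      simp only [hz, Fin.val_mk] at this
      omega
    have hzI : ∃ p ∈ A, z ≤ p := by
      by_contra hc
      exact hzne (hqmin z hc hzq)
    obtain ⟨p, hp, hzp⟩ := hzI
    refine ⟨p, hp, ?_⟩
    have h1 := hzp.1
    rw [Fin.le_def] at h1
    simp only [hz, Fin.val_mk] at h1
    by_contra hne
    exact hqI ⟨p, hp, ⟨by rw [Fin.le_def]; omega, hzp.2⟩⟩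
  · rintro ⟨p, hp, hp1⟩
    set t1 : ℕ := (A.filter (fun p' => x ≤ (p'.1 : ℕ))).sup (fun p' => (p'.2 : ℕ) + 1) with ht1
    have hbound : ∀ p' ∈ A.filter (fun p' => x ≤ (p'.1 : ℕ)), (p'.2 : ℕ) + 1 ≤ (p.2 : ℕ) := by
      intro p' hp'
      rw [Finset.mem_filter] at hp'
      have hlt : p.1 < p'.1 := by rw [Fin.lt_def]; omega
      have := anti_lt hA hp hp'.1 hlt
      rw [Fin.lt_def] at this; omega
    have ht1p : t1 ≤ (p.2 : ℕ) := Finset.sup_le hbound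
    have ht1b : t1 < b := lt_of_le_of_lt ht1p p.2.isLt
    have hyI : ¬ ∃ p' ∈ A, ((⟨x, hxa⟩ : Fin a), (⟨t1, ht1b⟩ : Fin b)) ≤ p' := by
      rintro ⟨p', hp', hle⟩
      have h1 := hle.1; have h2 := hle.2
      rw [Fin.le_def] at h1 h2
      simp only [Fin.val_mk] at h1 h2
      have hmem : p' ∈ A.filter (fun p' => x ≤ (p'.1 : ℕ)) := Finset.mem_filter.mpr ⟨hp', h1⟩
      have h3 : (p'.2 : ℕ) + 1 ≤ t1 := Finset.le_sup (f := fun p' => ((p'.2 : ℕ) + 1)) hmem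
      omega
    obtain ⟨q, hq, hqy⟩ := exists_min_le hyI
    refine ⟨q, hq, ?_⟩
    have h1 := hqy.1; have h2 := hqy.2
    rw [Fin.le_def] at h1 h2
    simp only [Fin.val_mk] at h1 h2
    by_contra hne
    exact (mem_rowmotionA.mp hq).1
      ⟨p, hp, ⟨by rw [Fin.le_def]; omega, by rw [Fin.le_def]; omega⟩⟩

lemma E2 {A : Finset (Fin a × Fin b)}
    (hA : IsAntichain (· ≤ ·) (↑A : Set (Fin a × Fin b)))
    {y : ℕ} (hy0 : 0 < y) (hyb : y < b) :
    (∃ q ∈ rowmotionA A, (q.2 : ℕ) = y) ↔ ∃ p ∈ A, (p.2 : ℕ) = y - 1 := by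
  constructor
  · rintro ⟨q, hq, hq2⟩
    obtain ⟨hqI, hqmin⟩ := mem_rowmotionA.mp hq
    set z : Fin a × Fin b := (q.1, ⟨y-1, by omega⟩) with hz
    have hzq : z ≤ q := ⟨le_rfl, by rw [Fin.le_def]; simp only [hz, Fin.val_mk]; omega⟩
    have hzne : z ≠ q := fun h => by
      have := congrArg (fun r => (r.2 : ℕ)) h
      simp only [hz, Fin.val_mk] at this
      omega
    have hzI : ∃ p ∈ A, z ≤ p := by
      by_contra hc
      exact hzne (hqmin z hc hzq)
    obtain ⟨p, hp, hzp⟩ := hzI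
    refine ⟨p, hp, ?_⟩
    have h2 := hzp.2
    rw [Fin.le_def] at h2
    simp only [hz, Fin.val_mk] at h2
    by_contra hne
    exact hqI ⟨p, hp, ⟨hzp.1, by rw [Fin.le_def]; omega⟩⟩
  · rintro ⟨p, hp, hp2⟩
    set s1 : ℕ := (A.filter (fun p' => y ≤ (p'.2 : ℕ))).sup (fun p' => (p'.1 : ℕ) + 1) with hs1
    have hbound : ∀ p' ∈ A.filter (fun p' => y ≤ (p'.2 : ℕ)), (p'.1 : ℕ) + 1 ≤ (p.1 : ℕ) := by
      intro p' hp'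
      rw [Finset.mem_filter] at hp'
      have hlt : p'.1 < p.1 := by
        rcases lt_trichotomy p'.1 p.1 with h | h | h
        · exact h
        · exfalso
          have : p' = p := fst_injOn hA (Finset.mem_coe.mpr hp'.1) (Finset.mem_coe.mpr hp) h
          rw [this] at hp'
          omega
        · exfalso
          have := anti_lt hA hp hp'.1 h
          rw [Fin.lt_def] at this
          omega
      rw [Fin.lt_def] at hlt; omega
    have hs1p : s1 ≤ (p.1 : ℕ) := Finset.sup_le hbound
    have hs1a : s1 < a := lt_of_le_of_lt hs1p p.1.isLt
    have hyI : ¬ ∃ p' ∈ A, ((⟨s1, hs1a⟩ : Fin a), (⟨y, hyb⟩ : Fin b)) ≤ p' := by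
      rintro ⟨p', hp', hle⟩
      have h1 := hle.1; have h2 := hle.2
      rw [Fin.le_def] at h1 h2
      simp only [Fin.val_mk] at h1 h2
      have hmem : p' ∈ A.filter (fun p' => y ≤ (p'.2 : ℕ)) := Finset.mem_filter.mpr ⟨hp', h2⟩
      have h3 : (p'.1 : ℕ) + 1 ≤ s1 := Finset.le_sup (f := fun p' => ((p'.1 : ℕ) + 1)) hmem
      omega
    obtain ⟨q, hq, hqy⟩ := exists_min_le hyI
    refine ⟨q, hq, ?_⟩
    have h1 := hqy.1; have h2 := hqy.2
    rw [Fin.le_def] at h1 h2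
    simp only [Fin.val_mk] at h1 h2
    by_contra hne
    exact (mem_rowmotionA.mp hq).1
      ⟨p, hp, ⟨by rw [Fin.le_def]; omega, by rw [Fin.le_def]; omega⟩⟩

end E
section Equi
open scoped Classical
variable {a b : ℕ}

lemma finRotate_val {n : ℕ} (hn : 0 < n) (i : Fin n) :
    ((finRotate n) i : ℕ) = if (i : ℕ) = n - 1 then 0 else (i : ℕ) + 1 := by
  cases n with
  | zero => exact absurd hn (lt_irrefl 0)
  | succ m =>
    rw [finRotate_succ_apply, Fin.val_add_one]
    by_cases h : i = Fin.last m
    · rw [if_pos h, if_pos (by rw [h]; simp [Fin.val_last])]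
    · rw [if_neg h, if_neg]
      intro hc
      exact h (Fin.ext (by simpa using hc))

lemma equivariant (ha : 1 ≤ a) (hb : 1 ≤ b)
    (A : Finset (Fin a × Fin b)) (hA : IsAntichain (· ≤ ·) (↑A : Set (Fin a × Fin b)))
    (i : Fin (a + b)) :
    stWord a b (rowmotionA A) (finRotate (a + b) i) = stWord a b A i := by
  set j := finRotate (a + b) i with hjdef
  have hj := finRotate_val (n := a + b) (by omega) i
  rw [← hjdef] at hj
  have hi := i.isLt
  by_cases h1 : (i : ℕ) < a - 1
  · -- within first block
    have hjv : (j : ℕ) = (i : ℕ) + 1 := by rw [hj, if_neg (by omega)]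
    have hE := E1 (A := A) hA (x := (i : ℕ) + 1) (by omega) (by omega)
    simp only [Nat.add_sub_cancel] at hE
    simp only [stWord, hjv]
    rw [if_pos (show (i : ℕ) + 1 < a by omega), if_pos (show (i : ℕ) < a by omega)]
    simp only [hE]
  · by_cases h2 : (i : ℕ) = a - 1
    · -- boundary a-1 → a
      have hjv : (j : ℕ) = a := by rw [hj, if_neg (by omega)]; omega
      have hE := E3 (A := A) ha hb
      simp only [stWord, hjv, h2]
      rw [if_neg (lt_irrefl a), if_pos (show a - 1 < a by omega)]
      have c1 : (∃ p ∈ rowmotionA A, (p.2 : ℕ) + a = a) ↔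
          (∃ p ∈ rowmotionA A, (p.2 : ℕ) = 0) := by
        constructor <;> rintro ⟨p, hp, h⟩ <;> exact ⟨p, hp, by omega⟩
      simp only [c1, hE]
      by_cases hC : ∃ p ∈ A, (p.1 : ℕ) = a - 1
      · simp [hC]
      · simp [hC]
    · by_cases h3 : (i : ℕ) < a + b - 1
      · -- within second block
        have hia : a ≤ (i : ℕ) := by omega
        have hjv : (j : ℕ) = (i : ℕ) + 1 := by rw [hj, if_neg (by omega)]
        have hE := E2 (A := A) hA (y := (i : ℕ) + 1 - a) (by omega) (by omega)
        simp only [stWord, hjv]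
        rw [if_neg (show ¬ ((i : ℕ) + 1 < a) by omega),
            if_neg (show ¬ ((i : ℕ) < a) by omega)]
        have c1 : (∃ p ∈ rowmotionA A, (p.2 : ℕ) + a = (i : ℕ) + 1) ↔
            (∃ p ∈ rowmotionA A, (p.2 : ℕ) = (i : ℕ) + 1 - a) := by
          constructor <;> rintro ⟨p, hp, h⟩ <;> exact ⟨p, hp, by omega⟩
        have c2 : (∃ p ∈ A, (p.2 : ℕ) + a = (i : ℕ)) ↔
            (∃ p ∈ A, (p.2 : ℕ) = (i : ℕ) + 1 - a - 1) := by
          constructor <;> rintro ⟨p, hp, h⟩ <;> exact ⟨p, hp, by omega⟩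
        simp only [c1, hE, c2]
      · -- wrap-around
        have hiv : (i : ℕ) = a + b - 1 := by omega
        have hjv : (j : ℕ) = 0 := by rw [hj, if_pos hiv]
        have hE := E4 (A := A) ha hb
        simp only [stWord, hjv, hiv]
        rw [if_pos (show (0 : ℕ) < a by omega), if_neg (show ¬ (a + b - 1 < a) by omega)]
        have c2 : (∃ p ∈ A, (p.2 : ℕ) + a = a + b - 1) ↔
            (∃ p ∈ A, (p.2 : ℕ) = b - 1) := by
          constructor <;> rintro ⟨p, hp, h⟩ <;> exact ⟨p, hp, by omega⟩
        simp only [c2, hE]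
        by_cases hC : ∃ p ∈ A, (p.2 : ℕ) = b - 1
        · simp [hC]
        · simp [hC]

end Equi
section Bij
open scoped Classical
variable {a b : ℕ}

lemma stWord_castAdd (A : Finset (Fin a × Fin b)) (i : Fin a) :
    stWord a b A (Fin.castAdd b i) = if i ∈ A.image Prod.fst then 1 else -1 := by
  have hc : (∃ p ∈ A, (p.1 : ℕ) = ((Fin.castAdd b i : Fin (a + b)) : ℕ)) ↔
      i ∈ A.image Prod.fst := by
    simp only [Fin.coe_castAdd, Finset.mem_image]
    constructor
    · rintro ⟨p, hp, h⟩; exact ⟨p, hp, Fin.ext h⟩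
    · rintro ⟨p, hp, h⟩; exact ⟨p, hp, congrArg Fin.val h⟩
  rw [stWord, if_pos (by simp [i.isLt])]
  simp only [hc]

lemma stWord_natAdd (A : Finset (Fin a × Fin b)) (j : Fin b) :
    stWord a b A (Fin.natAdd a j) = if j ∈ A.image Prod.snd then -1 else 1 := by
  have hc : (∃ p ∈ A, (p.2 : ℕ) + a = ((Fin.natAdd a j : Fin (a + b)) : ℕ)) ↔
      j ∈ A.image Prod.snd := by
    simp only [Fin.coe_natAdd, Finset.mem_image]
    constructor
    · rintro ⟨p, hp, h⟩; exact ⟨p, hp, Fin.ext (by omega)⟩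
    · rintro ⟨p, hp, h⟩; exact ⟨p, hp, by have := congrArg Fin.val h; omega⟩
  rw [stWord, if_neg (by simp)]
  simp only [hc]

lemma count_split (w : Fin (a + b) → ℤ) (c : ℤ) :
    (Finset.univ.filter (fun i => w i = c)).card =
      (Finset.univ.filter (fun i : Fin a => w (Fin.castAdd b i) = c)).card +
      (Finset.univ.filter (fun j : Fin b => w (Fin.natAdd a j) = c)).card := by
  rw [Finset.card_filter, Finset.card_filter, Finset.card_filter, Fin.sum_univ_add]

lemma blockS (A : Finset (Fin a × Fin b)) :
    (Finset.univ.filter (fun i : Fin a => stWord a b A (Fin.castAdd b i) = 1)) =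
      A.image Prod.fst := by
  ext i
  rw [Finset.mem_filter, stWord_castAdd]
  by_cases h : i ∈ A.image Prod.fst <;> simp [h]

lemma blockS_neg (A : Finset (Fin a × Fin b)) :
    (Finset.univ.filter (fun i : Fin a => stWord a b A (Fin.castAdd b i) = -1)) =
      (A.image Prod.fst)ᶜ := by
  ext i
  rw [Finset.mem_filter, stWord_castAdd]
  by_cases h : i ∈ A.image Prod.fst <;> simp [h]

lemma blockT (A : Finset (Fin a × Fin b)) :
    (Finset.univ.filter (fun j : Fin b => stWord a b A (Fin.natAdd a j) = -1)) =
      A.image Prod.snd := by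
  ext j
  rw [Finset.mem_filter, stWord_natAdd]
  by_cases h : j ∈ A.image Prod.snd <;> simp [h]

lemma blockT_pos (A : Finset (Fin a × Fin b)) :
    (Finset.univ.filter (fun j : Fin b => stWord a b A (Fin.natAdd a j) = 1)) =
      (A.image Prod.snd)ᶜ := by
  ext j
  rw [Finset.mem_filter, stWord_natAdd]
  by_cases h : j ∈ A.image Prod.snd <;> simp [h]

lemma cardST {A : Finset (Fin a × Fin b)}
    (hA : IsAntichain (· ≤ ·) (↑A : Set (Fin a × Fin b))) :
    (A.image Prod.fst).card = A.card ∧ (A.image Prod.snd).card = A.card :=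
  ⟨Finset.card_image_of_injOn (fst_injOn hA), Finset.card_image_of_injOn (snd_injOn hA)⟩

lemma mapsTo_counts {A : Finset (Fin a × Fin b)}
    (hA : IsAntichain (· ≤ ·) (↑A : Set (Fin a × Fin b))) :
    (Finset.univ.filter (fun i => stWord a b A i = -1)).card = a ∧
    (Finset.univ.filter (fun i => stWord a b A i = 1)).card = b := by
  obtain ⟨hS, hT⟩ := cardST hA
  have hSle : (A.image Prod.fst).card ≤ a := by
    have := Finset.card_le_univ (A.image Prod.fst)
    simpa using this
  have hTle : (A.image Prod.snd).card ≤ b := by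
    have := Finset.card_le_univ (A.image Prod.snd)
    simpa using this
  constructor
  · rw [count_split, blockS_neg, blockT, Finset.card_compl]
    simp only [Fintype.card_fin]
    omega
  · rw [count_split, blockS, blockT_pos, Finset.card_compl]
    simp only [Fintype.card_fin]
    omega

lemma rank_eq {A : Finset (Fin a × Fin b)}
    (hA : IsAntichain (· ≤ ·) (↑A : Set (Fin a × Fin b)))
    {p : Fin a × Fin b} (hp : p ∈ A) :
    ((A.image Prod.fst).filter (fun s => s < p.1)).card =
      ((A.image Prod.snd).filter (fun t => p.2 < t)).card := by
  have e1 : (A.image Prod.fst).filter (fun s => s < p.1) =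
      (A.filter (fun q => q.1 < p.1)).image Prod.fst := by
    ext s
    simp only [Finset.mem_filter, Finset.mem_image]
    constructor
    · rintro ⟨⟨q, hq, rfl⟩, hlt⟩; exact ⟨q, ⟨hq, hlt⟩, rfl⟩
    · rintro ⟨q, ⟨hq, hlt⟩, rfl⟩; exact ⟨⟨q, hq, rfl⟩, hlt⟩
  have e2 : (A.image Prod.snd).filter (fun t => p.2 < t) =
      (A.filter (fun q => p.2 < q.2)).image Prod.snd := by
    ext t
    simp only [Finset.mem_filter, Finset.mem_image]
    constructor
    · rintro ⟨⟨q, hq, rfl⟩, hlt⟩; exact ⟨q, ⟨hq, hlt⟩, rfl⟩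
    · rintro ⟨q, ⟨hq, hlt⟩, rfl⟩; exact ⟨⟨q, hq, rfl⟩, hlt⟩
  have e3 : A.filter (fun q => q.1 < p.1) = A.filter (fun q => p.2 < q.2) := by
    ext q
    simp only [Finset.mem_filter]
    constructor
    · rintro ⟨hq, hlt⟩
      exact ⟨hq, anti_lt hA hq hp hlt⟩
    · rintro ⟨hq, hlt⟩
      refine ⟨hq, ?_⟩
      rcases lt_trichotomy q.1 p.1 with h | h | h
      · exact h
      · exact absurd (congrArg Prod.snd
          (fst_injOn hA (Finset.mem_coe.mpr hq) (Finset.mem_coe.mpr hp) h)) (ne_of_gt hlt)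
      · exact absurd (anti_lt hA hp hq h) (asymm hlt)
  rw [e1, e2, e3]
  rw [Finset.card_image_of_injOn ((fst_injOn hA).mono
    (Finset.coe_subset.mpr (Finset.filter_subset _ _)))]
  rw [Finset.card_image_of_injOn ((snd_injOn hA).mono
    (Finset.coe_subset.mpr (Finset.filter_subset _ _)))]

lemma rank_inj {n : ℕ} {T : Finset (Fin n)} {t t' : Fin n} (ht : t ∈ T) (ht' : t' ∈ T)
    (h : (T.filter (fun x => t < x)).card = (T.filter (fun x => t' < x)).card) : t = t' := by
  have key : ∀ u v : Fin n, u ∈ T → v ∈ T → u < v →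
      (T.filter (fun x => v < x)).card < (T.filter (fun x => u < x)).card := by
    intro u v hu hv huv
    apply Finset.card_lt_card
    rw [Finset.ssubset_iff_of_subset]
    · exact ⟨v, Finset.mem_filter.mpr ⟨hv, huv⟩, fun hc =>
        absurd (Finset.mem_filter.mp hc).2 (lt_irrefl v)⟩
    · intro x hx
      rw [Finset.mem_filter] at hx ⊢
      exact ⟨hx.1, lt_trans huv hx.2⟩
  rcases lt_trichotomy t t' with hlt | he | hlt
  · exact absurd h (ne_of_gt (key t t' ht ht' hlt))
  · exact he
  · exact absurd h (ne_of_lt (key t' t ht' ht hlt))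

lemma mem_antichain_iff {A : Finset (Fin a × Fin b)}
    (hA : IsAntichain (· ≤ ·) (↑A : Set (Fin a × Fin b))) (p : Fin a × Fin b) :
    p ∈ A ↔ p.1 ∈ A.image Prod.fst ∧ p.2 ∈ A.image Prod.snd ∧
      ((A.image Prod.fst).filter (fun s => s < p.1)).card =
        ((A.image Prod.snd).filter (fun t => p.2 < t)).card := by
  constructor
  · intro hp
    exact ⟨Finset.mem_image_of_mem _ hp, Finset.mem_image_of_mem _ hp, rank_eq hA hp⟩
  · rintro ⟨h1, h2, h3⟩
    obtain ⟨q, hq, hq1⟩ := Finset.mem_image.mp h1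
    have hr := rank_eq hA hq
    rw [hq1] at hr
    have : q.2 = p.2 := rank_inj (Finset.mem_image_of_mem _ hq) h2 (by rw [← hr]; exact h3)
    have hpq : q = p := Prod.ext hq1 this
    rwa [← hpq]

lemma antichain_eq_of_images {A A' : Finset (Fin a × Fin b)}
    (hA : IsAntichain (· ≤ ·) (↑A : Set (Fin a × Fin b)))
    (hA' : IsAntichain (· ≤ ·) (↑A' : Set (Fin a × Fin b)))
    (hS : A.image Prod.fst = A'.image Prod.fst)
    (hT : A.image Prod.snd = A'.image Prod.snd) : A = A' := by
  ext p
  rw [mem_antichain_iff hA p, mem_antichain_iff hA' p, hS, hT]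

end Bij
section Surj
open scoped Classical
variable {a b : ℕ}

lemma word_total {w : Fin (a + b) → ℤ}
    (hw : (Finset.univ.filter (fun i => w i = -1)).card = a ∧
          (Finset.univ.filter (fun i => w i = 1)).card = b)
    (i : Fin (a + b)) : w i = 1 ∨ w i = -1 := by
  have hd : Disjoint (Finset.univ.filter (fun i => w i = -1))
      (Finset.univ.filter (fun i => w i = 1)) := by
    rw [Finset.disjoint_left]
    intro x hx hx'
    rw [Finset.mem_filter] at hx hx'
    have h1 := hx.2
    have h2 := hx'.2
    omega
  have hu : (Finset.univ.filter (fun i => w i = -1)) ∪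
      (Finset.univ.filter (fun i => w i = 1)) = Finset.univ := by
    apply Finset.eq_univ_of_card
    rw [Finset.card_union_of_disjoint hd, hw.1, hw.2, Fintype.card_fin]
  have hm : i ∈ (Finset.univ.filter (fun i => w i = -1)) ∪
      (Finset.univ.filter (fun i => w i = 1)) := by
    rw [hu]; exact Finset.mem_univ i
  rcases Finset.mem_union.mp hm with h | h
  · exact Or.inr (Finset.mem_filter.mp h).2
  · exact Or.inl (Finset.mem_filter.mp h).2

lemma canonical (S : Finset (Fin a)) (T : Finset (Fin b)) (h : T.card = S.card) :
    ∃ A : Finset (Fin a × Fin b), IsAntichain (· ≤ ·) (↑A : Set (Fin a × Fin b)) ∧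
      A.image Prod.fst = S ∧ A.image Prod.snd = T := by
  refine ⟨Finset.univ.image (fun k : Fin S.card =>
    (((S.orderIsoOfFin rfl) k : Fin a), ((T.orderIsoOfFin h) k.rev : Fin b))), ?_, ?_, ?_⟩
  · rintro p hp q hq hne hle
    obtain ⟨k, -, rfl⟩ := Finset.mem_image.mp (Finset.mem_coe.mp hp)
    obtain ⟨l, -, rfl⟩ := Finset.mem_image.mp (Finset.mem_coe.mp hq)
    have hkl : k ≠ l := fun hh => hne (by rw [hh])
    have h1 := hle.1
    have h2 := hle.2
    rcases lt_or_gt_of_ne hkl with hlt | hlt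
    · have hr : (T.orderIsoOfFin h) l.rev < (T.orderIsoOfFin h) k.rev :=
        (T.orderIsoOfFin h).strictMono (by rwa [Fin.rev_lt_rev])
      have : ((T.orderIsoOfFin h) l.rev : Fin b) < ((T.orderIsoOfFin h) k.rev : Fin b) := hr
      exact absurd h2 (not_le_of_gt this)
    · have hr : (S.orderIsoOfFin rfl) l < (S.orderIsoOfFin rfl) k :=
        (S.orderIsoOfFin rfl).strictMono hlt
      have : ((S.orderIsoOfFin rfl) l : Fin a) < ((S.orderIsoOfFin rfl) k : Fin a) := hr
      exact absurd h1 (not_le_of_gt this)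
  · rw [Finset.image_image]
    ext s
    simp only [Finset.mem_image, Finset.mem_univ, true_and, Function.comp_apply]
    constructor
    · rintro ⟨k, rfl⟩
      exact ((S.orderIsoOfFin rfl) k).2
    · intro hs
      exact ⟨(S.orderIsoOfFin rfl).symm ⟨s, hs⟩, by simp⟩
  · rw [Finset.image_image]
    ext t
    simp only [Finset.mem_image, Finset.mem_univ, true_and, Function.comp_apply]
    constructor
    · rintro ⟨k, rfl⟩
      exact ((T.orderIsoOfFin h) k.rev).2
    · intro ht
      exact ⟨((T.orderIsoOfFin h).symm ⟨t, ht⟩).rev, by simp [Fin.rev_rev]⟩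

lemma surj_construct (ha : 1 ≤ a) (hb : 1 ≤ b) {w : Fin (a + b) → ℤ}
    (hw : (Finset.univ.filter (fun i => w i = -1)).card = a ∧
          (Finset.univ.filter (fun i => w i = 1)).card = b) :
    ∃ A : Finset (Fin a × Fin b), IsAntichain (· ≤ ·) (↑A : Set (Fin a × Fin b)) ∧
      stWord a b A = w := by
  set S := Finset.univ.filter (fun i : Fin a => w (Fin.castAdd b i) = 1) with hSdef
  set T := Finset.univ.filter (fun j : Fin b => w (Fin.natAdd a j) = -1) with hTdef
  have htot := word_total hw
  have hbs : (Finset.univ.filter (fun i : Fin a => w (Fin.castAdd b i) = -1)) = Sᶜ := by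
    ext i
    simp only [Finset.mem_filter, Finset.mem_univ, true_and, Finset.mem_compl, hSdef]
    rcases htot (Fin.castAdd b i) with hh | hh <;> simp [hh]
  have hsplit := count_split w (-1)
  rw [hbs, ← hTdef, hw.1] at hsplit
  have hSle : S.card ≤ a := by
    have := Finset.card_le_univ S
    simpa using this
  have hcc : Sᶜ.card = a - S.card := by
    rw [Finset.card_compl]
    simp [Fintype.card_fin]
  rw [hcc] at hsplit
  have hcard : T.card = S.card := by omega
  obtain ⟨A, hA, himS, himT⟩ := canonical S T hcard
  refine ⟨A, hA, funext fun i => ?_⟩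
  by_cases hi : (i : ℕ) < a
  · have hcast : Fin.castAdd b (⟨(i : ℕ), hi⟩ : Fin a) = i := Fin.ext rfl
    rw [← hcast, stWord_castAdd, himS]
    by_cases hmem : (⟨(i : ℕ), hi⟩ : Fin a) ∈ S
    · rw [if_pos hmem]
      exact ((Finset.mem_filter.mp hmem).2).symm
    · rw [if_neg hmem]
      rcases htot (Fin.castAdd b ⟨(i : ℕ), hi⟩) with hh | hh
      · have hms : (⟨(i : ℕ), hi⟩ : Fin a) ∈ S := by
          rw [hSdef]
          exact Finset.mem_filter.mpr ⟨Finset.mem_univ _, hh⟩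
        exact absurd hms hmem
      · exact hh.symm
  · have hib : (i : ℕ) - a < b := by have := i.isLt; omega
    have hnat : Fin.natAdd a (⟨(i : ℕ) - a, hib⟩ : Fin b) = i :=
      Fin.ext (by simp [Fin.coe_natAdd]; omega)
    rw [← hnat, stWord_natAdd, himT]
    by_cases hmem : (⟨(i : ℕ) - a, hib⟩ : Fin b) ∈ T
    · rw [if_pos hmem]
      exact ((Finset.mem_filter.mp hmem).2).symm
    · rw [if_neg hmem]
      rcases htot (Fin.natAdd a ⟨(i : ℕ) - a, hib⟩) with hh | hh
      · exact hh.symm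
      · have hmt : (⟨(i : ℕ) - a, hib⟩ : Fin b) ∈ T := by
          rw [hTdef]
          exact Finset.mem_filter.mpr ⟨Finset.mem_univ _, hh⟩
        exact absurd hmt hmem

end Surj

theorem stanley_thomas_word_bijective_equivariant
    (a b : ℕ) (ha : 1 ≤ a) (hb : 1 ≤ b) :
    Set.BijOn (stWord a b)
      {A : Finset (Fin a × Fin b) | IsAntichain (· ≤ ·) (↑A : Set (Fin a × Fin b))}
      {w : Fin (a + b) → ℤ |
        (Finset.univ.filter (fun i => w i = -1)).card = a ∧
        (Finset.univ.filter (fun i => w i = 1)).card = b} ∧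
    ∀ A : Finset (Fin a × Fin b), IsAntichain (· ≤ ·) (↑A : Set (Fin a × Fin b)) →
      ∀ i : Fin (a + b), stWord a b (rowmotionA A) (finRotate (a + b) i) = stWord a b A i := by
  constructor
  · refine ⟨?_, ?_, ?_⟩
    · intro A hA
      exact mapsTo_counts hA
    · intro A hA A' hA' h
      apply antichain_eq_of_images hA hA'
      · rw [← blockS (a := a) (b := b) A, h, blockS A']
      · rw [← blockT (a := a) (b := b) A, h, blockT A']
    · intro w hw
      obtain ⟨A, hA, hst⟩ := surj_construct ha hb hw
      exact ⟨A, hA, hst⟩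
  · intro A hA i
    exact equivariant ha hb A hA i
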